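/- Let U_M, U_L: (0,∞) → ℝ be twice differentiable functions with U_M' > 0 and U_L' > 0, such that −U_M''(x)/U_M'(x) ≥ −U_L''(x)/U_L'(x) for all x > 0, and suppose at least one of the functions x ↦ −U_M''(x)/U_M'(x), x ↦ −U_L''(x)/U_L'(x) is nonincreasing on (0,∞). Then for every l ≥ 0, the function x ↦ U_L'(x+l)/U_M'(x) is monotone nondecreasing on (0,∞). -/

import Mathlib

open Set

/-- **Shifted ratio of marginal utilities is nondecreasing.**
If `U_M` is more risk averse than `U_L` on `(0,∞)` and at least one of the two
absolute risk aversions is nonincreasing, then for every `l ≥ 0` the function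
`x ↦ U_L'(x + l) / U_M'(x)` is nondecreasing on `(0,∞)`. -/
theorem shifted_ratio_monotone_of_nonincreasing_risk_aversion
    (UM UM' UM'' UL UL' UL'' : ℝ → ℝ)
    (hUMd : ∀ x > (0 : ℝ), HasDerivAt UM (UM' x) x)
    (hUMd' : ∀ x > (0 : ℝ), HasDerivAt UM' (UM'' x) x)
    (hULd : ∀ x > (0 : ℝ), HasDerivAt UL (UL' x) x)
    (hULd' : ∀ x > (0 : ℝ), HasDerivAt UL' (UL'' x) x)
    (hUM'pos : ∀ x > (0 : ℝ), 0 < UM' x)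
    (hUL'pos : ∀ x > (0 : ℝ), 0 < UL' x)
    (hRA : ∀ x > (0 : ℝ), -UL'' x / UL' x ≤ -UM'' x / UM' x)
    (hNIARA : AntitoneOn (fun x => -UM'' x / UM' x) (Ioi 0) ∨
      AntitoneOn (fun x => -UL'' x / UL' x) (Ioi 0)) :
    ∀ l ≥ (0 : ℝ), MonotoneOn (fun x => UL' (x + l) / UM' x) (Ioi 0) := by
  intro l hl
  have key : ∀ x ∈ Ioi (0:ℝ), HasDerivAt (fun x => UL' (x + l) / UM' x)
      ((UL'' (x + l) * UM' x - UL' (x + l) * UM'' x) / (UM' x)^2) x := by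
    intro x hx
    have hx0 : (0:ℝ) < x := hx
    have hxl : (0:ℝ) < x + l := by linarith
    have h1 : HasDerivAt (fun x => UL' (x + l)) (UL'' (x + l)) x := by
      have := (hULd' (x + l) hxl).comp x ((hasDerivAt_id x).add_const l)
      simpa [Function.comp_def] using this
    exact h1.div (hUMd' x hx0) (ne_of_gt (hUM'pos x hx0))
  apply monotoneOn_of_deriv_nonneg (convex_Ioi 0)
  · exact fun x hx => ((key x hx).continuousAt).continuousWithinAt
  · intro x hx
    rw [interior_Ioi] at hx
    exact ((key x hx).differentiableAt).differentiableWithinAt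
  · intro x hx
    rw [interior_Ioi] at hx
    rw [(key x hx).deriv]
    have hx0 : (0:ℝ) < x := hx
    have hxl : (0:ℝ) < x + l := by linarith
    have hALM : -UL'' (x + l) / UL' (x + l) ≤ -UM'' x / UM' x := by
      rcases hNIARA with hM | hL
      · exact (hRA (x + l) hxl).trans
          (hM hx (mem_Ioi.mpr hxl) (by linarith))
      · exact (hL (mem_Ioi.mpr hx0) (mem_Ioi.mpr hxl) (by linarith)).trans (hRA x hx0)
    rw [div_le_div_iff₀ (hUL'pos _ hxl) (hUM'pos _ hx0)] at hALM
    apply div_nonneg _ (sq_nonneg _)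
    nlinarith [hALM]
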